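/- arXiv:1402.5763 — 2 statements merged into one kernel-verified Lean document; each statement's English description precedes it below -/
import Mathlib

section
/- Let (𝒳, μ) be a probability space and let F = {f_1, …, f_M} ⊂ L_2(μ) be such that span(F) has dimension M. If B > 0 satisfies ‖f‖_{L∞} ≤ √B ‖f‖_{L2} for every f ∈ span(F), then B ≥ M. -/
open MeasureTheory ProbabilityTheory

/-- **Appendix fact** (Lecué–Mendelson). If `F = {f₁, …, f_M} ⊂ L₂(μ)` spans an `M`-dimensional
subspace (the `f_j` are linearly independent as elements of `L₂(μ)`) and
`‖f‖_{L∞} ≤ √B ‖f‖_{L₂}` for every `f ∈ span F`, then `B ≥ M`. -/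
theorem dim_le_of_Linfty_L2_equiv
    {𝒳 : Type*} [MeasurableSpace 𝒳] (μ : Measure 𝒳) [IsProbabilityMeasure μ]
    (M : ℕ) (F : Fin M → 𝒳 → ℝ) (hFmeas : ∀ j, Measurable (F j))
    (hFL2 : ∀ j, MemLp (F j) 2 μ)
    -- `span F` has dimension `M` in `L₂(μ)`: the `f_j` are a.e. linearly independent
    (hindep : ∀ c : Fin M → ℝ, (∑ j, c j • F j) =ᵐ[μ] 0 → c = 0)
    (B : ℝ) (hB : 0 < B)
    (hBound : ∀ f ∈ Submodule.span ℝ (Set.range F),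
      eLpNorm f ⊤ μ ≤ ENNReal.ofReal (Real.sqrt B) * eLpNorm f 2 μ) :
    (M : ℝ) ≤ B := by
  classical
  haveI : WellFoundedLT (Fin M) := inferInstance
  set g : Fin M → Lp ℝ 2 μ := fun j => (hFL2 j).toLp (F j) with hg_def
  have hg_ae : ∀ j, ⇑(g j) =ᵐ[μ] F j := fun j => (hFL2 j).coeFn_toLp
  -- coercion of linear combinations of `g`
  have key : ∀ (s : Finset (Fin M)) (d : Fin M → ℝ),
      ⇑(∑ i ∈ s, d i • g i) =ᵐ[μ] fun x => ∑ i ∈ s, d i * F i x := by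
    intro s d
    induction s using Finset.induction_on with
    | empty =>
        simp only [Finset.sum_empty]; exact Lp.coeFn_zero ℝ 2 μ
    | @insert a s ha ih =>
        rw [Finset.sum_insert ha]
        filter_upwards [Lp.coeFn_add (d a • g a) (∑ i ∈ s, d i • g i),
          Lp.coeFn_smul (d a) (g a), hg_ae a, ih] with x h1 h2 h3 h4
        rw [Finset.sum_insert ha, h1, Pi.add_apply, h2, Pi.smul_apply, h3, h4,
          smul_eq_mul]
  -- `g` is linearly independent
  have hgli : LinearIndependent ℝ g := by
    rw [Fintype.linearIndependent_iff]
    intro c hc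
    have h1 := key Finset.univ c
    rw [hc] at h1
    have h2 : (fun x => ∑ j, c j * F j x) =ᵐ[μ] 0 :=
      h1.symm.trans (Lp.coeFn_zero ℝ 2 μ)
    have h3 : (∑ j, c j • F j) =ᵐ[μ] 0 := by
      filter_upwards [h2] with x hx
      simpa [Finset.sum_apply] using hx
    have := hindep c h3
    intro i; rw [this]; rfl
  -- orthonormalize
  set φ : Fin M → Lp ℝ 2 μ := InnerProductSpace.gramSchmidtNormed ℝ g with hφ_def
  have hφon : Orthonormal ℝ φ := InnerProductSpace.gramSchmidtNormed_orthonormal hgli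
  have hφspan : ∀ j, φ j ∈ Submodule.span ℝ (Set.range g) := by
    intro j
    have h1 : φ j ∈ Submodule.span ℝ (Set.range φ) :=
      Submodule.subset_span (Set.mem_range_self j)
    rwa [hφ_def, InnerProductSpace.span_gramSchmidtNormed_range, InnerProductSpace.span_gramSchmidt] at h1
  have hφcoef : ∀ j, ∃ c : Fin M → ℝ, ∑ i, c i • g i = φ j := fun j =>
    (Submodule.mem_span_range_iff_exists_fun ℝ).mp (hφspan j)
  choose c hc using hφcoef
  set ψ : Fin M → 𝒳 → ℝ := fun j x => ∑ i, c j i * F i x with hψ_def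
  have hψae : ∀ j, ⇑(φ j) =ᵐ[μ] ψ j := by
    intro j
    have h1 := key Finset.univ (c j)
    rw [hc j] at h1
    exact h1
  -- linear combinations
  have hud : ∀ d : Fin M → ℝ, (∑ j, d j • φ j) = ∑ i, (∑ j, d j * c j i) • g i := by
    intro d
    simp_rw [← hc, Finset.smul_sum, smul_smul]
    rw [Finset.sum_comm]
    simp_rw [← Finset.sum_smul]
  have hfun_eq : ∀ d : Fin M → ℝ,
      (fun x => ∑ j, d j * ψ j x) = ∑ i, (∑ j, d j * c j i) • F i := by
    intro d
    funext x
    simp only [Finset.sum_apply, Pi.smul_apply, smul_eq_mul, hψ_def]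
    simp_rw [Finset.mul_sum, Finset.sum_mul, mul_assoc]
    exact Finset.sum_comm
  have hkey : ∀ d : Fin M → ℝ, ∀ᵐ x ∂μ,
      |∑ j, d j * ψ j x| ≤ Real.sqrt B * Real.sqrt (∑ j, d j ^ 2) := by
    intro d
    have hmem : (fun x => ∑ j, d j * ψ j x) ∈ Submodule.span ℝ (Set.range F) := by
      rw [hfun_eq d]
      exact Submodule.sum_mem _ fun i _ =>
        Submodule.smul_mem _ _ (Submodule.subset_span (Set.mem_range_self i))
    have hae_d : ⇑(∑ j, d j • φ j) =ᵐ[μ] fun x => ∑ j, d j * ψ j x := by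
      have h1 := key Finset.univ (fun i => ∑ j, d j * c j i)
      rw [← hud d] at h1
      refine h1.trans (Filter.EventuallyEq.of_eq ?_)
      rw [hfun_eq d]
      funext x
      simp [Finset.sum_apply]
    have hnorm : ‖∑ j, d j • φ j‖ = Real.sqrt (∑ j, d j ^ 2) := by
      have hsq : ‖∑ j, d j • φ j‖ ^ 2 = ∑ j, d j ^ 2 := by
        rw [← real_inner_self_eq_norm_sq]
        simpa [sq] using hφon.inner_sum d d Finset.univ
      rw [← Real.sqrt_sq (norm_nonneg _), hsq]
    have hL2 : eLpNorm (fun x => ∑ j, d j * ψ j x) 2 μ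
        = ENNReal.ofReal (Real.sqrt (∑ j, d j ^ 2)) := by
      rw [← eLpNorm_congr_ae hae_d,
        ← ENNReal.ofReal_toReal (Lp.eLpNorm_ne_top (∑ j, d j • φ j)), ← Lp.norm_def, hnorm]
    have hb := hBound _ hmem
    rw [hL2, ← ENNReal.ofReal_mul (Real.sqrt_nonneg B), eLpNorm_exponent_top] at hb
    filter_upwards [ae_le_eLpNormEssSup (f := fun x => ∑ j, d j * ψ j x) (μ := μ)]
      with x hx
    have h2 : (‖∑ j, d j * ψ j x‖₊ : ENNReal)
        ≤ ENNReal.ofReal (Real.sqrt B * Real.sqrt (∑ j, d j ^ 2)) := le_trans hx hb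
    rw [← enorm_eq_nnnorm, ← ofReal_norm, Real.norm_eq_abs,
      ENNReal.ofReal_le_ofReal_iff
        (mul_nonneg (Real.sqrt_nonneg B) (Real.sqrt_nonneg _))] at h2
    exact h2
  have hae : ∀ᵐ x ∂μ, ∀ q : Fin M → ℚ,
      |∑ j, (q j : ℝ) * ψ j x| ≤ Real.sqrt B * Real.sqrt (∑ j, (q j : ℝ) ^ 2) :=
    ae_all_iff.mpr fun q => hkey fun j => (q j : ℝ)
  -- pointwise bound
  have hptwise : ∀ᵐ x ∂μ, ∑ j, ψ j x ^ 2 ≤ B := by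
    filter_upwards [hae] with x hx
    set S : Set (Fin M → ℝ) :=
      {d | |∑ j, d j * ψ j x| ≤ Real.sqrt B * Real.sqrt (∑ j, d j ^ 2)} with hS
    have hSclosed : IsClosed S := by
      apply isClosed_le
      · exact (continuous_finset_sum _ fun j _ =>
          (continuous_apply j).mul continuous_const).abs
      · exact continuous_const.mul
          ((continuous_finset_sum _ fun j _ => (continuous_apply j).pow 2)).sqrt
    have hsub : (Set.pi Set.univ fun _ : Fin M => Set.range ((↑) : ℚ → ℝ)) ⊆ S := by
      intro d hd
      choose q hq using fun i => hd i (Set.mem_univ i)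
      have hdq : d = fun i => (q i : ℝ) := funext fun i => (hq i).symm
      simp only [hS, Set.mem_setOf_eq, hdq]
      exact hx q
    have hdense : Dense (Set.pi Set.univ fun _ : Fin M => Set.range ((↑) : ℚ → ℝ)) :=
      dense_pi Set.univ fun i _ => Rat.denseRange_cast
    have hall : ∀ d, d ∈ S := fun d =>
      hSclosed.closure_eq ▸ closure_mono hsub (hdense d)
    have h1 := hall fun j => ψ j x
    simp only [hS, Set.mem_setOf_eq] at h1
    set t := ∑ j, ψ j x ^ 2 with ht
    have htnn : 0 ≤ t := Finset.sum_nonneg fun j _ => sq_nonneg _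
    have h2 : t ≤ Real.sqrt B * Real.sqrt t := by
      have habs : |∑ j, ψ j x * ψ j x| = t := by
        rw [abs_of_nonneg (Finset.sum_nonneg fun j _ => mul_self_nonneg _)]
        simp [ht, sq]
      rw [habs] at h1
      exact h1
    rcases eq_or_lt_of_le htnn with h0 | h0
    · rw [← h0]; exact hB.le
    · have h3 : Real.sqrt t ≤ Real.sqrt B := by
        have h4 : Real.sqrt t * Real.sqrt t ≤ Real.sqrt B * Real.sqrt t := by
          rw [Real.mul_self_sqrt htnn]; exact h2
        exact le_of_mul_le_mul_right h4 (Real.sqrt_pos.mpr h0)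
      calc t = Real.sqrt t * Real.sqrt t := (Real.mul_self_sqrt htnn).symm
        _ ≤ Real.sqrt B * Real.sqrt B :=
            mul_le_mul h3 h3 (Real.sqrt_nonneg _) (Real.sqrt_nonneg _)
        _ = B := Real.mul_self_sqrt hB.le
  -- integrate
  have hψL2 : ∀ j, MemLp (ψ j) 2 μ := by
    intro j
    have := memLp_finset_sum (μ := μ) (p := 2) Finset.univ
      (f := fun i x => c j i * F i x) (fun i _ => (hFL2 i).const_mul _)
    exact this
  have hnorm1 : ∀ j, ∫ x, ψ j x ^ 2 ∂μ = 1 := by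
    intro j
    have h1 : (inner ℝ (φ j) (φ j) : ℝ) = 1 := by
      rw [real_inner_self_eq_norm_sq, hφon.1 j, one_pow]
    rw [L2.inner_def] at h1
    simp only [RCLike.inner_apply, conj_trivial] at h1
    rw [← h1]
    refine integral_congr_ae ?_
    filter_upwards [hψae j] with y hy
    rw [hy, sq]
  have hint : Integrable (fun x => ∑ j, ψ j x ^ 2) μ :=
    integrable_finset_sum _ fun j _ => (hψL2 j).integrable_sq
  have hM : ∫ x, (∑ j, ψ j x ^ 2) ∂μ = (M : ℝ) := by
    rw [integral_finset_sum _ fun j _ => (hψL2 j).integrable_sq]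
    simp [hnorm1]
  calc (M : ℝ) = ∫ x, (∑ j, ψ j x ^ 2) ∂μ := hM.symm
    _ ≤ ∫ _, B ∂μ := integral_mono_ae hint (integrable_const B) hptwise
    _ = B := by simp
end

section
/- There exists an absolute constant c₁ > 0 such that for every integer N ≥ 2 and every real x ≥ 1, there exists a mean-zero random variable ζ with E ζ² = 1 such that, for independent copies ζ_1, …, ζ_N of ζ, P((1/N)∑_{i=1}^N ζ_i² ≥ x) ≥ c₁ / x. -/
open MeasureTheory ProbabilityTheory Set Function

lemma my_pi_eval_preimage {ι : Type*} [Fintype ι] {β : ι → Type*} [∀ i, MeasurableSpace (β i)]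
    (μ : ∀ i, Measure (β i)) [∀ i, IsProbabilityMeasure (μ i)] (i : ι) (s : Set (β i)) :
    Measure.pi μ ((fun ω : ∀ j, β j => ω i) ⁻¹' s) = μ i s := by
  classical
  have h : (fun ω : ∀ j, β j => ω i) ⁻¹' s = eval i ⁻¹' s := rfl
  rw [h, Set.eval_preimage, Measure.pi_pi]
  rw [Finset.prod_eq_single i]
  · simp
  · intro j _ hj; simp [Function.update_of_ne hj]
  · simp

lemma my_iIndepFun_eval {ι : Type*} [Fintype ι] {β : ι → Type*} [m : ∀ i, MeasurableSpace (β i)]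
    (μ : ∀ i, Measure (β i)) [∀ i, IsProbabilityMeasure (μ i)] :
    iIndepFun (fun i (ω : ∀ j, β j) => ω i) (Measure.pi μ) := by
  classical
  rw [iIndepFun_iff_measure_inter_preimage_eq_mul]
  intro S sets hsets
  have h1 : (⋂ i ∈ S, (fun ω : ∀ j, β j => ω i) ⁻¹' sets i)
      = univ.pi (fun i => if i ∈ S then sets i else univ) := by
    ext ω
    simp only [Set.mem_iInter, Set.mem_preimage, Set.mem_pi, Set.mem_univ, true_implies]
    constructor
    · intro h i
      by_cases hi : i ∈ S <;> simp [hi, h i]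
    · intro h i hi
      have := h i; simp only [hi, if_true] at this; exact this
  rw [h1, Measure.pi_pi]
  calc (∏ i, μ i (if i ∈ S then sets i else univ))
      = ∏ i, (if i ∈ S then μ i (sets i) else 1) := by
        refine Finset.prod_congr rfl fun i _ => ?_
        by_cases hi : i ∈ S <;> simp [hi]
    _ = ∏ i ∈ S, μ i (sets i) := by
        rw [Finset.prod_ite_mem, Finset.univ_inter]
    _ = ∏ i ∈ S, Measure.pi μ ((fun ω : ∀ j, β j => ω i) ⁻¹' sets i) :=
        Finset.prod_congr rfl fun i hi => (my_pi_eval_preimage μ i (sets i)).symm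

lemma my_bernoulli_bound (N : ℕ) (x : ℝ) (hx : 1 ≤ x) (hN : (2:ℝ) ≤ N) :
    1 / (2*x) ≤ 1 - (1 - 1/((N:ℝ)*x)) ^ N := by
  have hx0 : (0:ℝ) < x := by linarith
  have hN0 : (0:ℝ) < N := by linarith
  have hNx : (0:ℝ) < N*x := by positivity
  set q : ℝ := 1/((N:ℝ)*x) with hq_def
  have hq0 : 0 < q := by positivity
  have hq1 : q ≤ 1 := by
    rw [hq_def, div_le_one hNx]; nlinarith
  set r : ℝ := (1-q)^N with hr_def
  have hr0 : 0 ≤ r := pow_nonneg (by linarith) N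
  set u : ℝ := 1/x with hu_def
  have hu0 : 0 < u := by positivity
  have hux : u * x = 1 := by rw [hu_def]; field_simp
  have hb : 1 + (N : ℝ) * q ≤ (1 + q) ^ N := by
    have := one_add_mul_le_pow (a := q) (by linarith) N
    linarith
  have hNq : (N : ℝ) * q = u := by rw [hq_def, hu_def]; field_simp
  have hkey : (1 + u) * r ≤ 1 := by
    have h1 : (1 + (N:ℝ)*q) * (1-q)^N ≤ (1+q)^N * (1-q)^N :=
      mul_le_mul_of_nonneg_right hb (pow_nonneg (by linarith) N)
    have h2 : (1+q)^N * (1-q)^N = (1 - q^2)^N := by rw [← mul_pow]; ring_nf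
    have h3 : (1 - q^2 : ℝ) ^ N ≤ 1 := pow_le_one₀ (by nlinarith) (by nlinarith)
    rw [hNq] at h1
    rw [hr_def]
    calc (1 + u) * (1-q)^N ≤ (1+q)^N * (1-q)^N := h1
      _ = (1 - q^2)^N := h2
      _ ≤ 1 := h3
  have hr1 : r ≤ 1 := by nlinarith [mul_nonneg hu0.le hr0]
  have h4 : r * x + r ≤ x := by
    nlinarith [mul_le_mul_of_nonneg_right hkey hx0.le, hux, hr0]
  rw [div_le_iff₀ (by positivity : (0:ℝ) < 2*x)]
  nlinarith [mul_nonneg (sub_nonneg.mpr hx) (sub_nonneg.mpr hr1)]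

/-- **Lemma 3** (Lecué–Mendelson). There is an absolute constant `c₁ > 0` such that for every
`N ≥ 2` and every `x ≥ 1` there is a mean-zero variance-one random variable `ζ` whose empirical
second moment `σ̂_N² = (1/N) ∑ᵢ ζᵢ²` over an iid sample satisfies
`P(σ̂_N² ≥ x) ≥ c₁ / x`. -/
theorem empirical_second_moment_heavy_tail :
    ∃ c₁ : ℝ, 0 < c₁ ∧
      ∀ (N : ℕ), 2 ≤ N → ∀ x : ℝ, 1 ≤ x →
      ∃ (Ω : Type) (mΩ : MeasurableSpace Ω) (P : Measure Ω), IsProbabilityMeasure P ∧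
      ∃ (ζ : Ω → ℝ) (ζi : Fin N → Ω → ℝ),
        Measurable ζ ∧
        (∫ ω, ζ ω ∂P) = 0 ∧ (∫ ω, (ζ ω) ^ 2 ∂P) = 1 ∧
        iIndepFun ζi P ∧
        (∀ i, IdentDistrib (ζi i) ζ P P) ∧
        c₁ / x ≤ (P {ω | x ≤ (1 / (N : ℝ)) * ∑ i, (ζi i ω) ^ 2}).toReal := by
  classical
  refine ⟨1/2, by norm_num, fun N hN x hx => ?_⟩
  have hNr : (2 : ℝ) ≤ N := by exact_mod_cast hN
  have hN0 : (0 : ℝ) < N := by linarith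
  have hx0 : (0 : ℝ) < x := by linarith
  have hNx : (0 : ℝ) < N * x := by positivity
  set q : ℝ := 1 / (N * x) with hq_def
  have hq0 : 0 < q := by positivity
  have hq2 : q ≤ 1/2 := by
    rw [hq_def, div_le_div_iff₀ hNx (by norm_num)]
    nlinarith
  have hq1 : q ≤ 1 := by linarith
  set a : ℝ := Real.sqrt (N * x) with ha_def
  have ha2 : a ^ 2 = N * x := Real.sq_sqrt hNx.le
  have hapos : 0 < a := Real.sqrt_pos.mpr hNx
  have ha0 : a ≠ 0 := ne_of_gt hapos
  have hna0 : -a ≠ 0 := neg_ne_zero.mpr ha0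
  -- the one-dimensional measure
  set μ : Measure ℝ := ENNReal.ofReal (q/2) • Measure.dirac a
      + ENNReal.ofReal (q/2) • Measure.dirac (-a)
      + ENNReal.ofReal (1-q) • Measure.dirac 0 with hμ_def
  have hμ_apply : ∀ s : Set ℝ, μ s = ENNReal.ofReal (q/2) * Measure.dirac a s
      + ENNReal.ofReal (q/2) * Measure.dirac (-a) s
      + ENNReal.ofReal (1-q) * Measure.dirac 0 s := by
    intro s
    simp [hμ_def, Measure.add_apply, Measure.smul_apply, smul_eq_mul]
  have hofReal_sum : ENNReal.ofReal (q/2) + ENNReal.ofReal (q/2) + ENNReal.ofReal (1-q) = 1 := by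
    rw [← ENNReal.ofReal_add (by positivity) (by positivity),
      ← ENNReal.ofReal_add (by positivity) (by linarith)]
    norm_num
  have hμ_prob : IsProbabilityMeasure μ := by
    constructor
    rw [hμ_apply]
    simp only [measure_univ, mul_one]
    exact hofReal_sum
  -- integrals against μ
  have hint_dirac : ∀ (f : ℝ → ℝ) (b : ℝ), Integrable f (Measure.dirac b) := by
    intro f b
    refine (integrable_const (f b)).congr ?_
    rw [Filter.EventuallyEq, ae_dirac_eq]
    exact Filter.eventually_pure.2 rfl
  have hI : ∀ f : ℝ → ℝ, Measurable f →
      (∫ y, f y ∂μ) = (q/2) * f a + (q/2) * f (-a) + (1-q) * f 0 := by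
    intro f hf
    rw [hμ_def, integral_add_measure
        (((hint_dirac f a).smul_measure ENNReal.ofReal_ne_top).add_measure
          ((hint_dirac f (-a)).smul_measure ENNReal.ofReal_ne_top))
        ((hint_dirac f 0).smul_measure ENNReal.ofReal_ne_top),
      integral_add_measure ((hint_dirac f a).smul_measure ENNReal.ofReal_ne_top)
        ((hint_dirac f (-a)).smul_measure ENNReal.ofReal_ne_top),
      integral_smul_measure, integral_smul_measure, integral_smul_measure,
      integral_dirac, integral_dirac, integral_dirac,
      ENNReal.toReal_ofReal (show (0:ℝ) ≤ q/2 by positivity),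
      ENNReal.toReal_ofReal (show (0:ℝ) ≤ 1-q by linarith)]
    simp only [smul_eq_mul]
  set i0 : Fin N := ⟨0, by omega⟩ with hi0_def
  set P : Measure (Fin N → ℝ) := Measure.pi (fun _ => μ) with hP_def
  have hPprob : IsProbabilityMeasure P := by rw [hP_def]; infer_instance
  have hmap : ∀ i : Fin N, Measure.map (fun ω : Fin N → ℝ => ω i) P = μ := by
    intro i
    ext s hs
    rw [Measure.map_apply (measurable_pi_apply i) hs, hP_def]
    exact my_pi_eval_preimage (fun _ => μ) i s
  have hpush : ∀ (f : ℝ → ℝ), Measurable f →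
      (∫ ω : Fin N → ℝ, f (ω i0) ∂P) = ∫ y, f y ∂μ := by
    intro f hf
    have := integral_map (μ := P) (φ := fun ω : Fin N → ℝ => ω i0) (f := f)
      (measurable_pi_apply i0).aemeasurable
      (by rw [hmap i0]; exact hf.aestronglyMeasurable)
    rw [hmap i0] at this
    exact this.symm
  refine ⟨Fin N → ℝ, inferInstance, P, hPprob,
    (fun ω => ω i0), (fun i ω => ω i), measurable_pi_apply _, ?_, ?_, ?_, ?_, ?_⟩
  · -- mean zero
    have h := (hpush (fun y => y) measurable_id).trans (hI (fun y => y) measurable_id)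
    calc (∫ ω : Fin N → ℝ, ω i0 ∂P) = (q/2) * a + (q/2) * (-a) + (1-q) * 0 := h
      _ = 0 := by ring
  · -- second moment one
    have h := (hpush (fun y => y ^ 2) (measurable_id.pow_const 2)).trans
      (hI (fun y => y ^ 2) (measurable_id.pow_const 2))
    calc (∫ ω : Fin N → ℝ, (ω i0) ^ 2 ∂P)
        = (q/2) * a ^ 2 + (q/2) * (-a) ^ 2 + (1-q) * (0:ℝ) ^ 2 := h
      _ = q * (N * x) := by rw [show ((-a):ℝ)^2 = a^2 by ring, ha2]; ring
      _ = 1 := by rw [hq_def]; field_simp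
  · exact my_iIndepFun_eval (fun _ => μ)
  · intro i
    exact ⟨(measurable_pi_apply _).aemeasurable, (measurable_pi_apply _).aemeasurable,
      (hmap i).trans (hmap i0).symm⟩
  · -- the tail bound
    set E : Set (Fin N → ℝ) := {ω | x ≤ (1 / (N : ℝ)) * ∑ i, (ω i) ^ 2} with hE_def
    have hEmeas : MeasurableSet E := by
      apply measurableSet_le measurable_const
      exact measurable_const.mul (Finset.measurable_sum _ fun i _ =>
        (measurable_pi_apply i).pow_const 2)
    set T : Set ℝ := {a, -a, 0} with hT_def
    have hμT : μ T = 1 := by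
      rw [hμ_apply]
      rw [Measure.dirac_apply_of_mem (by simp [hT_def]),
        Measure.dirac_apply_of_mem (by simp [hT_def]),
        Measure.dirac_apply_of_mem (by simp [hT_def])]
      simpa using hofReal_sum
    have hμ0 : μ {0} = ENNReal.ofReal (1-q) := by
      rw [hμ_apply]
      rw [Measure.dirac_apply, Measure.dirac_apply, Measure.dirac_apply]
      simp [ha0, hna0]
    set S : Set (Fin N → ℝ) := univ.pi (fun _ => T) with hS_def
    set Z : Set (Fin N → ℝ) := univ.pi (fun _ => ({0} : Set ℝ)) with hZ_def
    have hPS : P S = 1 := by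
      rw [hS_def, hP_def, Measure.pi_pi]
      simp [hμT]
    have hPZ : P Z = ENNReal.ofReal (1-q) ^ N := by
      rw [hZ_def, hP_def, Measure.pi_pi]
      simp [hμ0]
    have hTmeas : MeasurableSet T := by
      rw [hT_def]
      exact (measurableSet_singleton 0).insert (-a) |>.insert a
    have hSmeas : MeasurableSet S := MeasurableSet.univ_pi fun _ => hTmeas
    have hPSc : P Sᶜ = 0 := by
      rw [measure_compl hSmeas (measure_ne_top _ _), hPS, measure_univ, tsub_self]
    -- key inclusion: Eᶜ ⊆ Z ∪ Sᶜ
    have hincl : Eᶜ ⊆ Z ∪ Sᶜ := by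
      intro ω hω
      by_cases hωS : ω ∈ S
      · left
        rw [hZ_def]
        intro i _
        simp only [Set.mem_singleton_iff]
        by_contra hne
        have hωi : ω i ∈ T := hωS i (Set.mem_univ i)
        have hsq : (ω i) ^ 2 = N * x := by
          rw [hT_def] at hωi
          rcases hωi with h | h | h
          · rw [h]; exact ha2
          · rw [h, show ((-a):ℝ)^2 = a^2 by ring]; exact ha2
          · exact absurd h hne
        have hsum : (N : ℝ) * x ≤ ∑ j, (ω j) ^ 2 := by
          rw [← hsq]
          exact Finset.single_le_sum (fun j _ => sq_nonneg (ω j)) (Finset.mem_univ i)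
        have hxle : x ≤ (1 / (N : ℝ)) * ∑ j, (ω j) ^ 2 := by
          calc x = (1 / (N:ℝ)) * ((N:ℝ) * x) := by field_simp
            _ ≤ (1 / (N:ℝ)) * ∑ j, (ω j) ^ 2 :=
                mul_le_mul_of_nonneg_left hsum (by positivity)
        exact hω hxle
      · right; exact hωS
    have hPEc : P Eᶜ ≤ ENNReal.ofReal (1-q) ^ N := by
      calc P Eᶜ ≤ P (Z ∪ Sᶜ) := measure_mono hincl
        _ ≤ P Z + P Sᶜ := measure_union_le _ _
        _ = ENNReal.ofReal (1-q) ^ N := by rw [hPZ, hPSc, add_zero]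
    set r : ℝ := (1-q) ^ N with hr_def
    have hr0 : 0 ≤ r := pow_nonneg (by linarith) N
    have hr_real : 1 / (2 * x) ≤ 1 - r := by
      rw [hr_def, hq_def]
      exact my_bernoulli_bound N x hx hNr
    have hPE : ENNReal.ofReal (1 - r) ≤ P E := by
      have h1 : P E = 1 - P Eᶜ := by
        have h := prob_compl_eq_one_sub (μ := P) hEmeas.compl
        rwa [compl_compl] at h
      rw [h1]
      have h2 : ENNReal.ofReal (1-q) ^ N = ENNReal.ofReal r := by
        rw [hr_def, ENNReal.ofReal_pow (by linarith)]
      calc ENNReal.ofReal (1 - r) = 1 - ENNReal.ofReal r := by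
            rw [ENNReal.ofReal_sub 1 hr0, ENNReal.ofReal_one]
        _ ≤ 1 - P Eᶜ := by
            apply tsub_le_tsub_left
            rw [← h2]; exact hPEc
    have hfinal : ENNReal.ofReal (1/(2*x)) ≤ P E :=
      le_trans (ENNReal.ofReal_le_ofReal hr_real) hPE
    have hres := ENNReal.toReal_mono (measure_ne_top P E) hfinal
    rw [ENNReal.toReal_ofReal (by positivity)] at hres
    calc (1/2 : ℝ) / x = 1 / (2*x) := by ring
      _ ≤ (P E).toReal := hres
end
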